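/- Let A = (a_1, ..., a_m) be a configuration (an n×m integer matrix whose columns all lie on a common affine hyperplane not through the origin). Suppose a_{i_1} + ... + a_{i_r} = a_{j_1} + ... + a_{j_r} with r ≥ 3 and {i_1,...,i_r} ∩ {j_1,...,j_r} = ∅, and suppose that for all 1 ≤ k < ℓ ≤ r and all 1 ≤ p, q ≤ m, the equality a_{i_k} + a_{i_ℓ} = a_p + a_q holds if and only if {i_k, i_ℓ} = {p, q}. Then the toric ideal I_A is not generated by quadratic binomials. -/

import Mathlib

open MvPolynomial

private lemma pair_eq_pair' {α : Type*} {a b c d : α}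
    (h : ({a, b} : Multiset α) = {c, d}) : (a = c ∧ b = d) ∨ (a = d ∧ b = c) := by
  rcases Multiset.cons_eq_cons.mp h with ⟨hac, hbd⟩ | ⟨hne, cs, h1, h2⟩
  · exact Or.inl ⟨hac, Multiset.singleton_inj.mp hbd⟩
  · have hcs : cs = 0 := by
      have := congrArg Multiset.card h1
      simp at this
      exact this
    subst hcs
    simp only [Multiset.cons_zero, Multiset.singleton_inj] at h1 h2
    exact Or.inr ⟨h2.symm, h1⟩

private lemma prod_single_pow {K : Type*} [CommSemiring K] {n m : ℕ}
    (A : Fin m → Fin n → ℤ) (e : Fin m → ℕ) :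
    (∏ k, (AddMonoidAlgebra.single (A k) (1 : K)) ^ (e k)) =
      AddMonoidAlgebra.single (∑ k, e k • A k) (1 : K) := by
  induction (Finset.univ : Finset (Fin m)) using Finset.induction with
  | empty => simp [AddMonoidAlgebra.one_def]
  | @insert _ _ h ih =>
      rw [Finset.prod_insert h, Finset.sum_insert h, ih,
        AddMonoidAlgebra.single_pow, AddMonoidAlgebra.single_mul_single, one_pow, one_mul]

theorem stmt0 (K : Type*) [Field K] (n m r : ℕ) (hr : 3 ≤ r)
    (A : Fin m → Fin n → ℤ)
    (hconf : ∃ c : Fin n → ℝ, ∀ j : Fin m, (∑ i, (A j i : ℝ) * c i) = 1)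
    (i j : Fin r → Fin m)
    (hdisj : ∀ k l : Fin r, i k ≠ j l)
    (hsum : ∑ k, A (i k) = ∑ k, A (j k))
    (huniq : ∀ k l : Fin r, k < l → ∀ p q : Fin m,
      A (i k) + A (i l) = A p + A q ↔ ({i k, i l} : Multiset (Fin m)) = {p, q}) :
    ¬ ∃ S : Set (MvPolynomial (Fin m) K),
        (∀ f ∈ S, ∃ p q p' q' : Fin m, f = X p * X q - X p' * X q') ∧
        Ideal.span S =
          Ideal.span { f | ∃ b : Fin m → ℤ,
            (∑ k, b k • A k) = 0 ∧
            f = (∏ k, X k ^ (b k).toNat) - ∏ k, X k ^ (-(b k)).toNat } := by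
  classical
  rintro ⟨S, hSquad, hspan⟩
  set G : Set (MvPolynomial (Fin m) K) :=
    { f | ∃ b : Fin m → ℤ, (∑ k, b k • A k) = 0 ∧
        f = (∏ k, X k ^ (b k).toNat) - ∏ k, X k ^ (-(b k)).toNat } with hG
  -- the exponent vectors
  set M : Fin m →₀ ℕ := ∑ k, Finsupp.single (i k) 1 with hMdef
  set N : Fin m →₀ ℕ := ∑ k, Finsupp.single (j k) 1 with hNdef
  have happ : ∀ (v : Fin r → Fin m) (p : Fin m),
      ((∑ k, Finsupp.single (v k) 1 : Fin m →₀ ℕ)) p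
        = (Finset.univ.filter (fun k => v k = p)).card := by
    intro v p
    rw [Finsupp.finset_sum_apply, Finset.card_filter]
    refine Finset.sum_congr rfl fun k _ => ?_
    simp [Finsupp.single_apply, eq_comm]
  have hMapp : ∀ p, M p = (Finset.univ.filter (fun k => i k = p)).card := happ i
  have hNapp : ∀ p, N p = (Finset.univ.filter (fun k => j k = p)).card := happ j
  have hMex : ∀ p, M p ≠ 0 → ∃ k, i k = p := by
    intro p hp
    rw [hMapp] at hp
    obtain ⟨k, hk⟩ := Finset.card_ne_zero.mp hp
    exact ⟨k, (Finset.mem_filter.mp hk).2⟩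
  have hNex : ∀ p, N p ≠ 0 → ∃ k, j k = p := by
    intro p hp
    rw [hNapp] at hp
    obtain ⟨k, hk⟩ := Finset.card_ne_zero.mp hp
    exact ⟨k, (Finset.mem_filter.mp hk).2⟩
  have hMN : ∀ p, M p = 0 ∨ N p = 0 := by
    intro p
    by_contra h
    push_neg at h
    obtain ⟨k, hk⟩ := hMex p h.1
    obtain ⟨l, hl⟩ := hNex p h.2
    exact hdisj k l (hk.trans hl.symm)
  set b : Fin m → ℤ := fun k => (M k : ℤ) - (N k : ℤ) with hbdef
  have hbM : ∀ k, (b k).toNat = M k := by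
    intro k
    rcases hMN k with h | h <;> simp [hbdef, h] <;> omega
  have hbN : ∀ k, (-(b k)).toNat = N k := by
    intro k
    rcases hMN k with h | h <;> simp [hbdef, h] <;> omega
  -- weighted sum
  have hwsum : ∀ (v : Fin r → Fin m),
      (∑ k, ((∑ t, Finsupp.single (v t) 1 : Fin m →₀ ℕ) k : ℤ) • A k) = ∑ t, A (v t) := by
    intro v
    have : ∀ k, ((∑ t, Finsupp.single (v t) 1 : Fin m →₀ ℕ) k : ℤ) • A k
        = ∑ t, if v t = k then A k else 0 := by
      intro k
      rw [happ, Finset.card_filter]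
      push_cast
      rw [Finset.sum_smul]
      refine Finset.sum_congr rfl fun t _ => ?_
      split <;> simp
    rw [Finset.sum_congr rfl fun k _ => this k, Finset.sum_comm]
    refine Finset.sum_congr rfl fun t _ => ?_
    simp
  have hb0 : (∑ k, b k • A k) = 0 := by
    have : (∑ k, b k • A k) = (∑ t, A (i t)) - (∑ t, A (j t)) := by
      rw [← hwsum i, ← hwsum j, ← Finset.sum_sub_distrib]
      exact Finset.sum_congr rfl fun k _ => by rw [hbdef, sub_smul]
    rw [this, hsum, sub_self]
  -- the binomial f
  have hprodpow : ∀ (E : Fin m →₀ ℕ),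
      (∏ k, (X k : MvPolynomial (Fin m) K) ^ E k) = monomial E 1 := by
    intro E
    rw [← prod_X_pow_eq_monomial]
    exact (Finset.prod_subset (Finset.subset_univ _) (fun x _ hx => by
      simp [Finsupp.notMem_support_iff.mp hx])).symm
  have hfG : (monomial M 1 - monomial N 1 : MvPolynomial (Fin m) K) ∈ G := by
    refine ⟨b, hb0, ?_⟩
    rw [show (∏ k, (X k : MvPolynomial (Fin m) K) ^ (b k).toNat) = ∏ k, X k ^ M k from
        Finset.prod_congr rfl fun k _ => by rw [hbM],
      show (∏ k, (X k : MvPolynomial (Fin m) K) ^ (-(b k)).toNat) = ∏ k, X k ^ N k from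
        Finset.prod_congr rfl fun k _ => by rw [hbN], hprodpow, hprodpow]
  have hfS : (monomial M 1 - monomial N 1 : MvPolynomial (Fin m) K) ∈ Ideal.span S := by
    rw [hspan]
    exact Ideal.subset_span hfG
  -- the algebra map to the monoid algebra
  set φ : MvPolynomial (Fin m) K →ₐ[K] AddMonoidAlgebra K (Fin n → ℤ) :=
    aeval (fun k => AddMonoidAlgebra.single (A k) 1) with hφdef
  have hφpow : ∀ (e : Fin m → ℕ),
      φ (∏ k, X k ^ e k) = AddMonoidAlgebra.single (∑ k, e k • A k) 1 := by
    intro e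
    rw [map_prod]
    simp only [map_pow, hφdef, aeval_X]
    exact prod_single_pow A e
  have hφG : ∀ f ∈ G, φ f = 0 := by
    rintro f ⟨c, hc0, rfl⟩
    rw [map_sub, hφpow, hφpow]
    have : (∑ k, (c k).toNat • A k) = ∑ k, (-(c k)).toNat • A k := by
      have h2 : (∑ k, (c k).toNat • A k) - (∑ k, (-(c k)).toNat • A k) = ∑ k, c k • A k := by
        rw [← Finset.sum_sub_distrib]
        refine Finset.sum_congr rfl fun k _ => ?_
        have : ((c k).toNat : ℤ) - ((-(c k)).toNat : ℤ) = c k := by omega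
        rw [← natCast_zsmul, ← natCast_zsmul, ← sub_smul, this]
      rw [hc0] at h2
      exact sub_eq_zero.mp h2
    rw [this, sub_self]
  have hφspan : ∀ x ∈ Ideal.span G, φ x = 0 := by
    intro x hx
    have hle : Ideal.span G ≤ RingHom.ker φ.toRingHom :=
      Ideal.span_le.mpr fun f hf => hφG f hf
    exact hle hx
  -- degrees of quadrics in S
  have hφX : ∀ p q : Fin m, φ (X p * X q) = AddMonoidAlgebra.single (A p + A q) 1 := by
    intro p q
    rw [map_mul]
    simp only [hφdef, aeval_X]
    rw [AddMonoidAlgebra.single_mul_single, one_mul]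
  have hdeg : ∀ p q p' q' : Fin m, (X p * X q - X p' * X q' : MvPolynomial (Fin m) K) ∈ S →
      A p + A q = A p' + A q' := by
    intro p q p' q' hs
    have h0 : φ (X p * X q - X p' * X q') = 0 := by
      apply hφspan
      rw [← hspan]
      exact Ideal.subset_span hs
    rw [map_sub, hφX, hφX, sub_eq_zero] at h0
    rcases AddMonoidAlgebra.single_inj.mp h0 with ⟨h, _⟩ | ⟨h, _⟩
    · exact h
    · exact absurd h one_ne_zero
  -- key divisibility fact
  have hdiv : ∀ (g : MvPolynomial (Fin m) K) (p q : Fin m),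
      coeff M (g * (X p * X q)) ≠ 0 →
      ∃ k l : Fin r, k < l ∧ ({i k, i l} : Multiset (Fin m)) = {p, q} := by
    intro g p q hco
    rw [← mul_assoc, coeff_mul_X'] at hco
    split_ifs at hco with hq
    · rw [coeff_mul_X'] at hco
      split_ifs at hco with hp
      swap
      · exact absurd rfl hco
      have hMq : M q ≠ 0 := Finsupp.mem_support_iff.mp hq
      have hMp := Finsupp.mem_support_iff.mp hp
      by_cases hpq : p = q
      · subst hpq
        have h2 : 2 ≤ M p := by
          rw [Finsupp.tsub_apply, Finsupp.single_apply, if_pos rfl] at hMp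
          omega
        rw [hMapp] at h2
        obtain ⟨k, hk, l, hl, hkl⟩ := Finset.one_lt_card.mp h2
        simp only [Finset.mem_filter] at hk hl
        rcases hkl.lt_or_gt with h | h
        · exact ⟨k, l, h, by rw [hk.2, hl.2]⟩
        · exact ⟨l, k, h, by rw [hk.2, hl.2]⟩
      · have hMp' : M p ≠ 0 := by
          rw [Finsupp.tsub_apply, Finsupp.single_apply, if_neg (Ne.symm hpq), tsub_zero] at hMp
          exact hMp
        obtain ⟨k, hk⟩ := hMex p hMp'
        obtain ⟨l, hl⟩ := hMex q hMq
        have hkl : k ≠ l := fun h => hpq (by rw [← hk, ← hl, h])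
        rcases hkl.lt_or_gt with h | h
        · exact ⟨k, l, h, by rw [hk, hl]⟩
        · exact ⟨l, k, h, by rw [hk, hl, Multiset.pair_comm]⟩
    · exact absurd rfl hco
  -- key lemma: quadrics from S kill the coefficient at M
  have hkey : ∀ s ∈ S, ∀ g : MvPolynomial (Fin m) K, coeff M (g * s) = 0 := by
    intro s hs g
    obtain ⟨p, q, p', q', rfl⟩ := hSquad s hs
    have hAdeg : A p + A q = A p' + A q' := hdeg p q p' q' hs
    by_contra hco
    have hsplit : coeff M (g * (X p * X q)) ≠ 0 ∨ coeff M (g * (X p' * X q')) ≠ 0 := by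
      by_contra h
      push_neg at h
      apply hco
      rw [mul_sub, coeff_sub, h.1, h.2, sub_self]
    have hpq : ({p, q} : Multiset (Fin m)) = {p', q'} := by
      rcases hsplit with h | h
      · obtain ⟨k, l, hkl, hm⟩ := hdiv g p q h
        have h1 : A (i k) + A (i l) = A p + A q := (huniq k l hkl p q).mpr hm
        have h2 : ({i k, i l} : Multiset (Fin m)) = {p', q'} :=
          (huniq k l hkl p' q').mp (h1.trans hAdeg)
        exact hm.symm.trans h2
      · obtain ⟨k, l, hkl, hm⟩ := hdiv g p' q' h
        have h1 : A (i k) + A (i l) = A p' + A q' := (huniq k l hkl p' q').mpr hm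
        have h2 : ({i k, i l} : Multiset (Fin m)) = {p, q} :=
          (huniq k l hkl p q).mp (h1.trans hAdeg.symm)
        exact (h2.symm.trans hm)
    have hXX : (X p * X q : MvPolynomial (Fin m) K) = X p' * X q' := by
      rcases pair_eq_pair' hpq with ⟨h1, h2⟩ | ⟨h1, h2⟩
      · rw [h1, h2]
      · rw [h1, h2, mul_comm]
    apply hco
    rw [hXX, sub_self, mul_zero, coeff_zero]
  -- now span induction
  have hP : ∀ g : MvPolynomial (Fin m) K,
      coeff M (g * (monomial M 1 - monomial N 1)) = 0 := by
    have := hfS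
    rw [Ideal.span] at this
    refine Submodule.span_induction
      (p := fun x _ => ∀ g : MvPolynomial (Fin m) K, coeff M (g * x) = 0)
      (fun s hs => hkey s hs) (by simp) ?_ ?_ this
    · intro x y _ _ hx hy g
      rw [mul_add, coeff_add, hx, hy, add_zero]
    · intro c x _ hx g
      rw [smul_eq_mul, ← mul_assoc, hx]
  have h1 := hP 1
  rw [one_mul, coeff_sub] at h1
  have hMN' : M ≠ N := by
    intro h
    have k0 : Fin r := ⟨0, by omega⟩
    have hM0 : M (i k0) ≠ 0 := by
      rw [hMapp]
      refine Finset.card_ne_zero.mpr ⟨k0, Finset.mem_filter.mpr ⟨Finset.mem_univ _, rfl⟩⟩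
    obtain ⟨l, hl⟩ := hNex (i k0) (h ▸ hM0)
    exact hdisj k0 l hl.symm
  rw [coeff_monomial, coeff_monomial, if_pos rfl, if_neg (Ne.symm hMN')] at h1
  simp at h1
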